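/- arXiv:2603.20396 — 2 statements merged into one kernel-verified Lean document; each statement's English description precedes it below -/
import Mathlib

section
/- Let M ⊆ A_n be a macro set with |M ∩ B_G(r)| ≤ c(log(e + r))^q for all r ≥ 0, where c, q > 0 are constants, and suppose B_G(r) ⊆ B_{G'}(s) for some integers r, s ≥ 1. Then the number of elements of B_G(r) is bounded by the number of words of length at most s over the alphabet G ∪ (M ∩ B_G(r)); concretely, C(r+n, n) ≤ (s+1) · ((n + c)(log(e + r))^q)^s, and hence r^n / n! ≤ (s+1)(n+c)^s (log(e+r))^{qs}. -/
open scoped ENNReal BigOperators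

/-- The length of an element of the free abelian monoid `A_n = ℕ^n` with respect to the
standard generators `G = {a_1, …, a_n}`: the sum of its coordinates. -/
def glen {n : ℕ} (w : Fin n → ℕ) : ℕ := ∑ j, w j

/-- The standard generating set `G` of `A_n = ℕ^n`: the standard basis vectors. -/
def gens (n : ℕ) : Set (Fin n → ℕ) := {w | ∃ i : Fin n, w = fun t => if t = i then 1 else 0}

/-- The length of `w` with respect to a generating set `S`: the minimum number of elements
of `S` (with repetition) summing to `w`; `⊤` if `w` is not representable. -/
noncomputable def slen {n : ℕ} (S : Set (Fin n → ℕ)) (w : Fin n → ℕ) : ℕ∞ :=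
  sInf {k : ℕ∞ | ∃ l : Multiset (Fin n → ℕ), (∀ x ∈ l, x ∈ S) ∧ l.sum = w ∧ (l.card : ℕ∞) = k}

/-- The expansion function `f_{G'}(s) = sup { r ∈ ℕ : B_G(r) ⊆ B_{G'}(s) }`, valued in
`ℝ≥0∞` (so that `⊤` means the ball inclusion holds for every radius `r`). -/
noncomputable def expansion {n : ℕ} (S : Set (Fin n → ℕ)) (s : ℕ) : ℝ≥0∞ :=
  sSup {x : ℝ≥0∞ | ∃ r : ℕ, x = (r : ℝ≥0∞) ∧ ∀ w : Fin n → ℕ, glen w ≤ r → slen S w ≤ (s : ℕ∞)}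

private lemma glen_add {n : ℕ} (a b : Fin n → ℕ) : glen (a + b) = glen a + glen b := by
  simp [glen, Finset.sum_add_distrib]

/-- **The counting bound behind the polylog upper bound.**
If `|M ∩ B_G(r)| ≤ c(log(e + r))^q` for all `r ≥ 0` and `B_G(r) ⊆ B_{G'}(s)` for some
integers `r, s ≥ 1`, then `|B_G(r)| = C(r+n, n)` is at most the number of words of length
`≤ s` over `G ∪ (M ∩ B_G(r))`: concretely
`C(r+n, n) ≤ (s+1)·((n + c)(log(e + r))^q)^s`, hence
`r^n/n! ≤ (s+1)(n+c)^s (log(e+r))^{qs}`. -/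
theorem counting_bound_polylog
    (n : ℕ) (hn : 1 ≤ n) (c q : ℝ) (hc : 0 < c) (hq : 0 < q)
    (M : Set (Fin n → ℕ))
    (hM : ∀ r : ℕ, ((M ∩ {w | glen w ≤ r}).ncard : ℝ)
            ≤ c * (Real.log (Real.exp 1 + r)) ^ q)
    (r s : ℕ) (hr : 1 ≤ r) (hs : 1 ≤ s)
    (hball : ∀ w : Fin n → ℕ, glen w ≤ r → slen (gens n ∪ M) w ≤ (s : ℕ∞)) :
    ((r + n).choose n : ℝ)
        ≤ (s + 1 : ℝ) * (((n : ℝ) + c) * (Real.log (Real.exp 1 + r)) ^ q) ^ s ∧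
    (r : ℝ) ^ n / (n.factorial : ℝ)
        ≤ (s + 1 : ℝ) * ((n : ℝ) + c) ^ s * (Real.log (Real.exp 1 + r)) ^ (q * s) := by
  classical
  set L : ℝ := Real.log (Real.exp 1 + r) with hLdef
  have hL1 : 1 ≤ L := by
    have h1 : Real.exp 1 ≤ Real.exp 1 + r := le_add_of_nonneg_right (Nat.cast_nonneg r)
    have := Real.log_le_log (Real.exp_pos 1) h1
    rwa [Real.log_exp] at this
  have hLq : 1 ≤ L ^ q := Real.one_le_rpow hL1 hq.le
  -- the ball of radius r as a Finset
  set Ball : Finset (Fin n → ℕ) :=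
    (Fintype.piFinset fun _ : Fin n => Finset.range (r + 1)).filter (fun w => glen w ≤ r)
    with hBalldef
  have hmemBall : ∀ w : Fin n → ℕ, w ∈ Ball ↔ glen w ≤ r := by
    intro w
    simp only [hBalldef, Finset.mem_filter, Fintype.mem_piFinset, Finset.mem_range]
    constructor
    · exact fun h => h.2
    · intro h
      refine ⟨fun j => Nat.lt_succ_of_le (le_trans ?_ h), h⟩
      exact Finset.single_le_sum (f := fun j => w j) (fun _ _ => Nat.zero_le _) (Finset.mem_univ j)
  -- lower bound: choose ≤ |Ball| (stars and bars)
  have hlow : (r + n).choose n ≤ Ball.card := by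
    have hcard : Fintype.card (Sym (Fin (n + 1)) r) = (r + n).choose n := by
      rw [Sym.card_sym_eq_choose]
      simp only [Fintype.card_fin]
      rw [Nat.add_comm r n, show n + 1 + r - 1 = n + r from by omega,
        ← Nat.choose_symm (Nat.le_add_left r n)]
      congr 1; omega
    rw [← hcard, ← Finset.card_univ]
    refine Finset.card_le_card_of_injOn
      (fun m : Sym (Fin (n + 1)) r => fun j : Fin n =>
        Multiset.count j.castSucc (m : Multiset (Fin (n + 1)))) ?_ ?_
    · intro m _
      rw [Finset.mem_coe, hmemBall]
      have htot : ∑ i : Fin (n + 1), Multiset.count i (m : Multiset (Fin (n + 1))) = r := by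
        rw [Multiset.sum_count_eq_card (fun a _ => Finset.mem_univ a)]
        exact m.2
      rw [Fin.sum_univ_castSucc] at htot
      show ∑ j : Fin n, Multiset.count j.castSucc (m : Multiset (Fin (n + 1))) ≤ r
      omega
    · intro m₁ h₁ m₂ h₂ heq
      have htot₁ : ∑ i : Fin (n + 1), Multiset.count i (m₁ : Multiset (Fin (n + 1))) = r := by
        rw [Multiset.sum_count_eq_card (fun a _ => Finset.mem_univ a)]; exact m₁.2
      have htot₂ : ∑ i : Fin (n + 1), Multiset.count i (m₂ : Multiset (Fin (n + 1))) = r := by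
        rw [Multiset.sum_count_eq_card (fun a _ => Finset.mem_univ a)]; exact m₂.2
      have hcnt : ∀ j : Fin n, Multiset.count j.castSucc (m₁ : Multiset (Fin (n + 1)))
          = Multiset.count j.castSucc (m₂ : Multiset (Fin (n + 1))) := fun j => congrFun heq j
      have hsum_eq : ∑ j : Fin n, Multiset.count j.castSucc (m₁ : Multiset (Fin (n + 1)))
          = ∑ j : Fin n, Multiset.count j.castSucc (m₂ : Multiset (Fin (n + 1))) :=
        Finset.sum_congr rfl (fun j _ => hcnt j)
      rw [Fin.sum_univ_castSucc] at htot₁ htot₂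
      have hlast : Multiset.count (Fin.last n) (m₁ : Multiset (Fin (n + 1)))
          = Multiset.count (Fin.last n) (m₂ : Multiset (Fin (n + 1))) := by omega
      apply Subtype.ext
      ext a
      induction a using Fin.lastCases with
      | last => exact hlast
      | cast j => exact hcnt j
  -- finite alphabet
  set GFin : Finset (Fin n → ℕ) :=
    Finset.image (fun i : Fin n => fun t => if t = i then 1 else 0) Finset.univ with hGdef
  have hMB : (M ∩ {w | glen w ≤ r}).Finite := by
    refine Set.Finite.subset Ball.finite_toSet ?_
    intro x hx
    rw [Finset.mem_coe, hmemBall]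
    exact hx.2
  set MFin : Finset (Fin n → ℕ) := hMB.toFinset with hMdef
  set F : Finset (Fin n → ℕ) := Ball.filter (fun w => w ∈ gens n ∪ M) with hFdef
  have hxF : ∀ x : Fin n → ℕ, glen x ≤ r → x ∈ gens n ∪ M → x ∈ F := by
    intro x h1 h2
    rw [hFdef, Finset.mem_filter, hmemBall]
    exact ⟨h1, h2⟩
  have hF1 : 1 ≤ F.card := by
    refine Finset.card_pos.mpr ⟨fun t => if t = (⟨0, hn⟩ : Fin n) then 1 else 0, hxF _ ?_ (Or.inl ⟨⟨0, hn⟩, rfl⟩)⟩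
    have : glen (fun t => if t = (⟨0, hn⟩ : Fin n) then 1 else 0) = 1 := by
      simp [glen, Finset.sum_ite_eq']
    omega
  have hFcard : F.card ≤ n + (M ∩ {w | glen w ≤ r}).ncard := by
    have hsub : F ⊆ GFin ∪ MFin := by
      intro x hx
      rw [hFdef, Finset.mem_filter, hmemBall] at hx
      rcases hx.2 with hg | hm
      · obtain ⟨i, rfl⟩ := hg
        exact Finset.mem_union_left _ (Finset.mem_image_of_mem _ (Finset.mem_univ i))
      · exact Finset.mem_union_right _ (hMB.mem_toFinset.mpr ⟨hm, hx.1⟩)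
    calc F.card ≤ (GFin ∪ MFin).card := Finset.card_le_card hsub
      _ ≤ GFin.card + MFin.card := Finset.card_union_le _ _
      _ ≤ n + (M ∩ {w | glen w ≤ r}).ncard := by
          refine Nat.add_le_add ?_ ?_
          · exact le_trans Finset.card_image_le (by simp)
          · rw [Set.ncard_eq_toFinset_card _ hMB]
  -- representation of ball elements by short multisets
  have hrep : ∀ w : Fin n → ℕ, glen w ≤ r → ∃ l : Multiset (Fin n → ℕ),
      (∀ x ∈ l, x ∈ gens n ∪ M) ∧ l.sum = w ∧ Multiset.card l ≤ s := by
    intro w hw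
    have h := hball w hw
    rw [slen] at h
    set S : Set ℕ∞ := {k | ∃ l : Multiset (Fin n → ℕ),
      (∀ x ∈ l, x ∈ gens n ∪ M) ∧ l.sum = w ∧ (Multiset.card l : ℕ∞) = k} with hSdef
    have hne : S.Nonempty := by
      by_contra hne
      rw [Set.not_nonempty_iff_eq_empty] at hne
      rw [hne, sInf_empty, top_le_iff] at h
      exact absurd h (by simp)
    obtain ⟨m, hmS, hmin⟩ := wellFounded_lt.has_min S hne
    have hms : m ≤ (s : ℕ∞) :=
      le_trans (le_sInf (fun b hb => not_lt.mp (hmin b hb))) h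
    obtain ⟨l, h1, h2, h3⟩ := hmS
    refine ⟨l, h1, h2, ?_⟩
    rw [← h3] at hms
    exact_mod_cast hms
  -- the word set
  set T : Finset (Fin n → ℕ) := (Finset.range (s + 1)).biUnion (fun k =>
    Finset.image (fun g : Fin k → (Fin n → ℕ) => ∑ i, g i)
      (Fintype.piFinset (fun _ : Fin k => F))) with hTdef
  have hsubT : Ball ⊆ T := by
    intro w hw
    rw [hmemBall] at hw
    obtain ⟨l, hlmem, hlsum, hlcard⟩ := hrep w hw
    have hglen : ∀ x ∈ l, glen x ≤ r := by
      intro x hx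
      obtain ⟨l', rfl⟩ := Multiset.exists_cons_of_mem hx
      rw [Multiset.sum_cons] at hlsum
      have : glen (x + l'.sum) = glen x + glen l'.sum := glen_add x l'.sum
      rw [hlsum] at this
      omega
    have hlF : ∀ x ∈ l, x ∈ F := fun x hx => hxF x (hglen x hx) (hlmem x hx)
    have hLc : l.toList.length ≤ s := by rw [Multiset.length_toList]; exact hlcard
    refine Finset.mem_biUnion.mpr ⟨l.toList.length,
      Finset.mem_range.mpr (Nat.lt_succ_of_le hLc), Finset.mem_image.mpr
      ⟨fun i => l.toList.get i, ?_, ?_⟩⟩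
    · rw [Fintype.mem_piFinset]
      intro i
      exact hlF _ (Multiset.mem_toList.mp (l.toList.get_mem i))
    · calc (∑ i, l.toList.get i) = l.toList.sum := by rw [← List.sum_ofFn, List.ofFn_get]
        _ = l.sum := Multiset.sum_toList l
        _ = w := hlsum
  have hT : T.card ≤ (s + 1) * F.card ^ s := by
    calc T.card ≤ ∑ k ∈ Finset.range (s + 1), (Finset.image
          (fun g : Fin k → (Fin n → ℕ) => ∑ i, g i)
          (Fintype.piFinset (fun _ : Fin k => F))).card := Finset.card_biUnion_le
      _ ≤ ∑ k ∈ Finset.range (s + 1), F.card ^ k := by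
          refine Finset.sum_le_sum fun k _ => le_trans Finset.card_image_le ?_
          rw [Fintype.card_piFinset]
          simp
      _ ≤ ∑ _k ∈ Finset.range (s + 1), F.card ^ s :=
          Finset.sum_le_sum fun k hk =>
            Nat.pow_le_pow_right hF1 (Nat.le_of_lt_succ (Finset.mem_range.mp hk))
      _ = (s + 1) * F.card ^ s := by rw [Finset.sum_const, Finset.card_range, smul_eq_mul]
  -- the main nat inequality
  have hnat : (r + n).choose n ≤ (s + 1) * F.card ^ s :=
    le_trans hlow (le_trans (Finset.card_le_card hsubT) hT)
  -- pass to the reals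
  have hFR : (F.card : ℝ) ≤ ((n : ℝ) + c) * L ^ q := by
    have h1 : (F.card : ℝ) ≤ (n : ℝ) + ((M ∩ {w | glen w ≤ r}).ncard : ℝ) := by
      exact_mod_cast hFcard
    have h2 := hM r
    have h3 : (0 : ℝ) ≤ (n : ℝ) := Nat.cast_nonneg n
    nlinarith [hLq]
  have hmain : ((r + n).choose n : ℝ) ≤ (s + 1 : ℝ) * (((n : ℝ) + c) * L ^ q) ^ s := by
    have h1 : ((r + n).choose n : ℝ) ≤ (s + 1 : ℝ) * (F.card : ℝ) ^ s := by
      exact_mod_cast hnat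
    refine h1.trans ?_
    refine mul_le_mul_of_nonneg_left (pow_le_pow_left₀ (Nat.cast_nonneg _) hFR s) (by positivity)
  refine ⟨hmain, ?_⟩
  -- second statement
  have hpow : (r : ℝ) ^ n / (n.factorial : ℝ) ≤ ((r + n).choose n : ℝ) := by
    rw [div_le_iff₀ (by positivity)]
    have h1 : r ^ n ≤ (r + n).choose n * n.factorial := by
      calc r ^ n ≤ (r + 1).ascFactorial n :=
            le_trans (Nat.pow_le_pow_left (Nat.le_succ r) n) (Nat.pow_succ_le_ascFactorial _ n)
        _ = n.factorial * (r + n).choose n := Nat.ascFactorial_eq_factorial_mul_choose r n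
        _ = (r + n).choose n * n.factorial := Nat.mul_comm _ _
    exact_mod_cast h1
  have hrw : (s + 1 : ℝ) * (((n : ℝ) + c) * L ^ q) ^ s
      = (s + 1 : ℝ) * ((n : ℝ) + c) ^ s * L ^ (q * s) := by
    rw [mul_pow, ← mul_assoc]
    congr 1
    rw [Real.rpow_mul (le_trans zero_le_one hL1), Real.rpow_natCast]
  rw [← hrw]
  exact le_trans hpow hmain
end

section
/- Fix an integer k ≥ 2 and let g be a positive integer with the Waring property for exponent k: every nonnegative integer is a sum of at most g k-th powers of positive integers. Let M = { m^k · a_i : 1 ≤ i ≤ n, m ≥ 1 } ⊆ A_n. Then |M ∩ B_G(r)| = n⌊r^{1/k}⌋ ≤ n · r^{1/k} for all r ≥ 1, and every element w ∈ A_n satisfies |w|_{G'} ≤ n·g; consequently f_{G'}(s) = ∞ for all s ≥ n·g. -/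
open scoped ENNReal BigOperators

private lemma msum_card {ι α : Type*} (s : Finset ι) (f : ι → Multiset α) :
    (∑ i ∈ s, f i).card = ∑ i ∈ s, (f i).card := by
  induction s using Finset.cons_induction with
  | empty => simp
  | cons a t ha ih => simp [Finset.sum_cons, ih]

private lemma msum_sum {ι α : Type*} [AddCommMonoid α] (s : Finset ι) (f : ι → Multiset α) :
    (∑ i ∈ s, f i).sum = ∑ i ∈ s, (f i).sum := by
  induction s using Finset.cons_induction with
  | empty => simp
  | cons a t ha ih => simp [Finset.sum_cons, ih]

private lemma map_sum_apply {n : ℕ} (l : Multiset ℕ) (φ : ℕ → Fin n → ℕ) (j : Fin n) :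
    (l.map φ).sum j = (l.map fun m => φ m j).sum := by
  induction l using Multiset.induction with
  | empty => simp
  | cons a l ih => simp [ih]

/-- **Polynomial density gives infinite expansion (Waring macros).**
Fix `k ≥ 2` and let `g ≥ 1` have the Waring property for exponent `k`: every natural
number is a sum of at most `g` `k`-th powers of positive integers. For the macro set
`M = { m^k · a_i : 1 ≤ i ≤ n, m ≥ 1 }` we have `|M ∩ B_G(r)| = n⌊r^{1/k}⌋ ≤ n·r^{1/k}`
for all `r ≥ 1`, every `w ∈ A_n` satisfies `|w|_{G'} ≤ n·g`, and consequently
`f_{G'}(s) = ∞` for all `s ≥ n·g`. -/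
theorem waring_macros_infinite_expansion
    (n k g : ℕ) (hn : 1 ≤ n) (hk : 2 ≤ k) (hg : 1 ≤ g)
    (hWaring : ∀ x : ℕ, ∃ l : Multiset ℕ,
      (l.card ≤ g) ∧ (∀ m ∈ l, ∃ t : ℕ, 1 ≤ t ∧ m = t ^ k) ∧ l.sum = x)
    (M : Set (Fin n → ℕ))
    (hM : M = {w | ∃ i : Fin n, ∃ m : ℕ, 1 ≤ m ∧ w = fun t => if t = i then m ^ k else 0}) :
    (∀ r : ℕ, 1 ≤ r →
      (M ∩ {w | glen w ≤ r}).ncard = n * ⌊(r : ℝ) ^ ((1 : ℝ) / (k : ℝ))⌋₊ ∧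
      ((M ∩ {w | glen w ≤ r}).ncard : ℝ) ≤ (n : ℝ) * (r : ℝ) ^ ((1 : ℝ) / (k : ℝ))) ∧
    (∀ w : Fin n → ℕ, slen (gens n ∪ M) w ≤ ((n * g : ℕ) : ℕ∞)) ∧
    (∀ s : ℕ, n * g ≤ s → expansion (gens n ∪ M) s = ⊤) := by
  have hk0 : (0 : ℝ) < (k : ℝ) := by positivity
  -- Part 2 first
  have part2 : ∀ w : Fin n → ℕ, slen (gens n ∪ M) w ≤ ((n * g : ℕ) : ℕ∞) := by
    intro w
    choose l hcard hpow hsum using fun i => hWaring (w i)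
    set L : Multiset (Fin n → ℕ) :=
      ∑ i : Fin n, (l i).map (fun m => fun t => if t = i then m else 0) with hL
    have hmem : ∀ x ∈ L, x ∈ gens n ∪ M := by
      intro x hx
      rw [hL, Multiset.mem_sum] at hx
      obtain ⟨i, -, hx⟩ := hx
      rw [Multiset.mem_map] at hx
      obtain ⟨m, hm, rfl⟩ := hx
      obtain ⟨t, ht1, rfl⟩ := hpow i m hm
      exact Or.inr (hM ▸ ⟨i, t, ht1, rfl⟩)
    have hsumL : L.sum = w := by
      funext j
      have h1 : L.sum j = ∑ i : Fin n, ((l i).map (fun m => fun t => if t = i then m else 0)).sum j := by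
        rw [hL, msum_sum]
        simp [Finset.sum_apply]
      rw [h1]
      have h2 : ∀ i : Fin n,
          ((l i).map (fun m => fun t => if t = i then m else 0)).sum j
            = if j = i then w j else 0 := by
        intro i
        rw [map_sum_apply]
        by_cases h : j = i
        · subst h; simp [hsum]
        · simp [h]
      simp only [h2]
      simp
    have hcardL : L.card ≤ n * g := by
      rw [hL, msum_card]
      calc ∑ i : Fin n, ((l i).map _).card ≤ ∑ _i : Fin n, g := by
            apply Finset.sum_le_sum
            intro i _
            simpa using hcard i
        _ = n * g := by simp [mul_comm]
    refine le_trans (sInf_le ⟨L, hmem, hsumL, rfl⟩) ?_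
    exact_mod_cast hcardL
  refine ⟨?_, part2, ?_⟩
  · -- Part 1: counting
    intro r hr
    set N : ℕ := ⌊(r : ℝ) ^ ((1 : ℝ) / (k : ℝ))⌋₊ with hN
    have hrpow_nonneg : (0 : ℝ) ≤ (r : ℝ) ^ ((1 : ℝ) / (k : ℝ)) := by positivity
    have key : ∀ m : ℕ, (m ^ k ≤ r ↔ m ≤ N) := by
      intro m
      rw [hN, Nat.le_floor_iff hrpow_nonneg, one_div,
        Real.le_rpow_inv_iff_of_pos (by positivity) (by positivity) hk0,
        Real.rpow_natCast]
      constructor <;> intro h <;> exact_mod_cast h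
    set F : Fin n × ℕ → (Fin n → ℕ) := fun p => fun t => if t = p.1 then p.2 ^ k else 0 with hF
    have hglen : ∀ (i : Fin n) (c : ℕ), glen (fun t => if t = i then c else 0) = c := by
      intro i c; simp [glen]
    have hset : M ∩ {w | glen w ≤ r}
        = ↑((Finset.univ ×ˢ Finset.Icc 1 N).image F) := by
      ext w
      constructor
      · rintro ⟨hw, hle⟩
        rw [hM] at hw
        obtain ⟨i, m, hm, rfl⟩ := hw
        have hmr : m ^ k ≤ r := by simpa [hglen i (m ^ k)] using hle
        refine Finset.mem_coe.mpr (Finset.mem_image.mpr ⟨(i, m), ?_, rfl⟩)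
        simp [Finset.mem_Icc, hm, (key m).1 hmr]
      · intro hw
        obtain ⟨⟨i, m⟩, hp, rfl⟩ := Finset.mem_image.mp (Finset.mem_coe.mp hw)
        simp only [Finset.mem_product, Finset.mem_Icc] at hp
        refine ⟨hM ▸ ⟨i, m, hp.2.1, rfl⟩, ?_⟩
        show glen _ ≤ r
        rw [hF]
        simpa [hglen i (m ^ k)] using (key m).2 hp.2.2
    have hinj : Set.InjOn F ((Finset.univ ×ˢ Finset.Icc 1 N : Finset (Fin n × ℕ)) : Set (Fin n × ℕ)) := by
      rintro ⟨i, m⟩ hp ⟨i', m'⟩ hq h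
      simp only [Finset.coe_product, Set.mem_prod, Finset.mem_coe, Finset.mem_Icc] at hp hq
      have hm1 : 1 ≤ m := hp.2.1
      have h1 : m ^ k = if i = i' then m' ^ k else 0 := by
        have := congrFun h i
        simpa [hF] using this
      have hii : i = i' := by
        by_contra hii
        rw [if_neg hii] at h1
        have : 0 < m ^ k := Nat.pow_pos hm1
        omega
      subst hii
      rw [if_pos rfl] at h1
      have : m = m' := Nat.pow_left_injective (by omega) h1
      simp [this]
    have hcount : (M ∩ {w | glen w ≤ r}).ncard = n * N := by
      rw [hset, Set.ncard_coe_finset, Finset.card_image_of_injOn hinj,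
        Finset.card_product, Finset.card_univ, Fintype.card_fin, Nat.card_Icc, Nat.add_sub_cancel]
    refine ⟨hcount, ?_⟩
    rw [hcount]
    push_cast
    exact mul_le_mul_of_nonneg_left (Nat.floor_le hrpow_nonneg) (by positivity)
  · -- Part 3
    intro s hs
    rw [expansion, eq_top_iff, ← ENNReal.iSup_natCast]
    apply iSup_le
    intro r
    apply le_sSup
    exact ⟨r, rfl, fun w _ => le_trans (part2 w) (Nat.cast_le.mpr hs)⟩
end
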